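/- For every integer n ≥ 1, if x and y are distinct strings in {a,b}^n and i (1 ≤ i ≤ n) is the 1-based index of the leftmost position where x and y differ, then exactly one of the strings x·b^{i-1}·a and y·b^{i-1}·a belongs to L_n. -/

import Mathlib

inductive Letter | a | b
deriving DecidableEq

instance : Fintype Letter := ⟨{Letter.a, Letter.b}, fun x => by cases x <;> simp⟩

/-- The language `L_n`: strings with two `a`'s at distance exactly `n`. -/
def L (n : ℕ) : Language Letter :=
  {w | ∃ i, i + n < w.length ∧ w[i]? = some Letter.a ∧ w[i + n]? = some Letter.a}

lemma key (n : ℕ) (x : List Letter) (hx : x.length = n) (j : ℕ) (hj : j < n) :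
    (x ++ (List.replicate j Letter.b ++ [Letter.a]) ∈ L n) ↔ x[j]? = some Letter.a := by
  constructor
  · rintro ⟨i, hlen, h1, h2⟩
    have hlen' : i ≤ j := by
      simp [List.length_append, hx, List.length_replicate] at hlen; omega
    have hzi : (x ++ (List.replicate j Letter.b ++ [Letter.a]))[i+n]?
        = (List.replicate j Letter.b ++ [Letter.a])[i]? := by
      rw [List.getElem?_append_right (by omega)]
      congr 1; omega
    rcases lt_or_eq_of_le hlen' with h | h
    · rw [hzi, List.getElem?_append_left (by simpa using h), List.getElem?_replicate] at h2
      simp [h] at h2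
    · subst h
      rw [List.getElem?_append_left (by omega)] at h1
      exact h1
  · intro h
    refine ⟨j, ?_, ?_, ?_⟩
    · simp [hx]; omega
    · rw [List.getElem?_append_left (by omega)]; exact h
    · rw [List.getElem?_append_right (by omega)]
      simp [hx]

/-- If `j` is the (0-based) leftmost position where `x` and `y` differ
(so `i = j + 1` is the 1-based index), then exactly one of
`x·b^{i-1}·a` and `y·b^{i-1}·a` belongs to `L_n`. -/
theorem stmt4 (n : ℕ) (hn : 1 ≤ n) (x y : List Letter)
    (hx : x.length = n) (hy : y.length = n) (hxy : x ≠ y)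
    (j : ℕ) (hj : j < n) (hdiff : x[j]? ≠ y[j]?)
    (hmin : ∀ l, l < j → x[l]? = y[l]?) :
    Xor' (x ++ (List.replicate j Letter.b ++ [Letter.a]) ∈ L n)
         (y ++ (List.replicate j Letter.b ++ [Letter.a]) ∈ L n) := by
  rw [key n x hx j hj, key n y hy j hj]
  have hxj : j < x.length := by omega
  have hyj : j < y.length := by omega
  rw [List.getElem?_eq_getElem hxj, List.getElem?_eq_getElem hyj] at hdiff ⊢
  cases hxa : x[j] <;> cases hya : y[j] <;> simp_all [Xor']
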